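/- Let G₁ and G₂ be simple graphs on disjoint finite vertex sets, let f₁ be a strong integer additive set-labeling of G₁ and f₂ a strong integer additive set-labeling of G₂, and suppose the combined labeling f (equal to f₁ on V(G₁) and f₂ on V(G₂)) is injective. Then f is a strong integer additive set-labeling of the join G₁ + G₂ (the graph containing all edges of G₁, all edges of G₂, and all edges between V(G₁) and V(G₂)) if and only if D_{f₁(u)} ∩ D_{f₂(v)} = ∅ for every vertex u of G₁ and every vertex v of G₂. -/
import Mathlib


open Finset Pointwise

/-- The difference set of a finset of naturals:
the set of positive differences of distinct elements. -/
def diffSet (A : Finset ℕ) : Finset ℕ :=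
  ((A ×ˢ A).filter fun p => p.2 < p.1).image fun p => p.1 - p.2

/-- `f` is a strong integer additive set-labeling of `G`. -/
def IsStrongIASL {V : Type*} (G : SimpleGraph V) (f : V → Finset ℕ) : Prop :=
  (∀ v, (f v).Nonempty) ∧ Function.Injective f ∧
    ∀ u v, G.Adj u v → (f u + f v).card = (f u).card * (f v).card

/-- The join `G₁ + G₂` of two graphs on disjoint vertex sets: all edges of `G₁`,
all edges of `G₂`, and all edges between `V(G₁)` and `V(G₂)`. -/
def joinGraph {V₁ V₂ : Type*} (G₁ : SimpleGraph V₁) (G₂ : SimpleGraph V₂) :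
    SimpleGraph (V₁ ⊕ V₂) :=
  (G₁ ⊕g G₂) ⊔ completeBipartiteGraph V₁ V₂

lemma mem_diffSet {A : Finset ℕ} {d : ℕ} :
    d ∈ diffSet A ↔ ∃ a ∈ A, ∃ b ∈ A, b < a ∧ a - b = d := by
  simp only [diffSet, mem_image, mem_filter, mem_product]
  constructor
  · rintro ⟨⟨a, b⟩, ⟨⟨ha, hb⟩, hlt⟩, rfl⟩
    exact ⟨a, ha, b, hb, hlt, rfl⟩
  · rintro ⟨a, ha, b, hb, hlt, rfl⟩
    exact ⟨⟨a, b⟩, ⟨⟨ha, hb⟩, hlt⟩, rfl⟩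

lemma sumset_card_eq_iff (A B : Finset ℕ) :
    (A + B).card = A.card * B.card ↔ Disjoint (diffSet A) (diffSet B) := by
  rw [← Finset.image_add_product, ← Finset.card_product, Finset.card_image_iff]
  constructor
  · intro hinj
    rw [Finset.disjoint_left]
    intro d hdA hdB
    obtain ⟨a, ha, a', ha', hlt, hd⟩ := mem_diffSet.1 hdA
    obtain ⟨b, hb, b', hb', hlt', hd'⟩ := mem_diffSet.1 hdB
    have hsum : a + b' = a' + b := by omega
    have := hinj (by simp [ha, hb'] : ((a, b') : ℕ × ℕ) ∈ ↑(A ×ˢ B))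
      (by simp [ha', hb] : ((a', b) : ℕ × ℕ) ∈ ↑(A ×ˢ B)) hsum
    simp at this
    omega
  · intro hdisj
    rintro ⟨a, b⟩ hab ⟨a', b'⟩ hab' (h : a + b = a' + b')
    simp only [coe_product, Set.mem_prod, mem_coe] at hab hab'
    rcases lt_trichotomy a a' with hlt | heq | hgt
    · have hdA : a' - a ∈ diffSet A := mem_diffSet.2 ⟨a', hab'.1, a, hab.1, hlt, rfl⟩
      have hdB : b - b' ∈ diffSet B := mem_diffSet.2 ⟨b, hab.2, b', hab'.2, by omega, by omega⟩
      have := Finset.disjoint_left.1 hdisj hdA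
      rw [show a' - a = b - b' by omega] at this
      exact absurd hdB this
    · simp [heq]; omega
    · have hdA : a - a' ∈ diffSet A := mem_diffSet.2 ⟨a, hab.1, a', hab'.1, hgt, rfl⟩
      have hdB : b' - b ∈ diffSet B := mem_diffSet.2 ⟨b', hab'.2, b, hab.2, by omega, by omega⟩
      have := Finset.disjoint_left.1 hdisj hdA
      rw [show a - a' = b' - b by omega] at this
      exact absurd hdB this

/-- Given strong IASLs `f₁` of `G₁` and `f₂` of `G₂` whose combination is injective,
the combined labeling is a strong IASL of the join `G₁ + G₂` iff the difference set of
the set-label of every vertex of `G₁` is disjoint from the difference set of the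
set-label of every vertex of `G₂`. -/
theorem strongIASL_join_iff {V₁ V₂ : Type*} [Fintype V₁] [Fintype V₂]
    (G₁ : SimpleGraph V₁) (G₂ : SimpleGraph V₂)
    (f₁ : V₁ → Finset ℕ) (f₂ : V₂ → Finset ℕ)
    (h₁ : IsStrongIASL G₁ f₁) (h₂ : IsStrongIASL G₂ f₂)
    (hinj : Function.Injective (Sum.elim f₁ f₂)) :
    IsStrongIASL (joinGraph G₁ G₂) (Sum.elim f₁ f₂) ↔
      ∀ (u : V₁) (v : V₂), Disjoint (diffSet (f₁ u)) (diffSet (f₂ v)) := by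
  constructor
  · intro hs u v
    have hadj : (joinGraph G₁ G₂).Adj (Sum.inl u) (Sum.inr v) := by
      simp [joinGraph]
    have := hs.2.2 (Sum.inl u) (Sum.inr v) hadj
    simp only [Sum.elim_inl, Sum.elim_inr] at this
    exact (sumset_card_eq_iff _ _).1 this
  · intro hd
    refine ⟨fun v => by cases v <;> simp [h₁.1, h₂.1], hinj, ?_⟩
    rintro (u | u) (v | v) hadj
    · simp only [Sum.elim_inl]
      have : G₁.Adj u v := by
        simpa [joinGraph] using hadj
      exact h₁.2.2 u v this
    · simp only [Sum.elim_inl, Sum.elim_inr]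
      exact (sumset_card_eq_iff _ _).2 (hd u v)
    · simp only [Sum.elim_inr, Sum.elim_inl]
      rw [add_comm (f₂ u) (f₁ v), mul_comm]
      exact (sumset_card_eq_iff _ _).2 (hd v u)
    · simp only [Sum.elim_inr]
      have : G₂.Adj u v := by
        simpa [joinGraph] using hadj
      exact h₂.2.2 u v this
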